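/- Let C be an almost MDS code over F_q with parameters [n, k, n-k] satisfying k·A_{n-k} + A_{n-k+1} = (q-1)·binomial(n, n-k+1). Then C is a near MDS code, i.e., the dual code C^⊥ is an AMDS code with parameters [n, n-k, k]. -/

import Mathlib

open Finset

/-- The submodule of vectors supported in a finset `I`. -/
def suppCode (F : Type*) [Field F] (n : ℕ) (I : Finset (Fin n)) :
    Submodule F (Fin n → F) where
  carrier := {c | ∀ i, i ∉ I → c i = 0}
  add_mem' := by
    intro a b ha hb i hi
    simp [ha i hi, hb i hi]
  zero_mem' := by
    intro i _
    rfl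
  smul_mem' := by
    intro r a ha i hi
    simp [ha i hi]

/-- `C` is an `[n, k, n-k]` almost MDS code. -/
def IsAMDS (F : Type*) [Field F] [DecidableEq F] (n k : ℕ)
    (C : Submodule F (Fin n → F)) : Prop :=
  Module.finrank F C = k ∧
  (∀ c ∈ C, c ≠ 0 → n - k ≤ hammingNorm c) ∧
  (∃ c ∈ C, c ≠ 0 ∧ hammingNorm c = n - k)

/-- The Euclidean dual code. -/
def dualCode {F : Type*} [Field F] {n : ℕ} (C : Submodule F (Fin n → F)) :
    Submodule F (Fin n → F) where
  carrier := {x | ∀ c ∈ C, ∑ i, x i * c i = 0}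
  add_mem' := by
    intro a b ha hb c hc
    simp [Pi.add_apply, add_mul, Finset.sum_add_distrib, ha c hc, hb c hc]
  zero_mem' := by
    intro c _
    simp
  smul_mem' := by
    intro r a ha c hc
    simp [Pi.smul_apply, smul_eq_mul, mul_assoc, ← Finset.mul_sum, ha c hc]

section Aux

open Module

variable {F : Type*} [Field F] [DecidableEq F] {n : ℕ}

lemma mem_suppCode {S : Finset (Fin n)} {c : Fin n → F} :
    c ∈ suppCode F n S ↔ ∀ i ∉ S, c i = 0 := Iff.rfl

/-- The support of a vector as a finset. -/
def spt (c : Fin n → F) : Finset (Fin n) := Finset.filter (fun i => c i ≠ 0) Finset.univ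

lemma hammingNorm_eq_card_spt (c : Fin n → F) : hammingNorm c = (spt c).card := by
  rw [hammingNorm, spt]

lemma mem_spt {c : Fin n → F} {i : Fin n} : i ∈ spt c ↔ c i ≠ 0 := by
  simp [spt]

lemma mem_suppCode_iff_spt {S : Finset (Fin n)} {c : Fin n → F} :
    c ∈ suppCode F n S ↔ spt c ⊆ S := by
  constructor
  · intro h i hi
    by_contra hS
    exact mem_spt.mp hi (h i hS)
  · intro h i hi
    by_contra hc
    exact hi (h (mem_spt.mpr hc))

/-- `suppCode` is linearly equivalent to functions on `S`. -/
noncomputable def suppCodeEquiv (S : Finset (Fin n)) : (suppCode F n S) ≃ₗ[F] (↥S → F) where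
  toFun c := fun j => c.1 j
  map_add' a b := rfl
  map_smul' r a := rfl
  invFun g := ⟨fun i => if h : i ∈ S then g ⟨i, h⟩ else 0, by
    intro i hi
    simp [hi]⟩
  left_inv := by
    rintro ⟨c, hc⟩
    apply Subtype.ext
    funext i
    by_cases h : i ∈ S
    · simp [h]
    · simp [h, hc i h]
  right_inv := by
    intro g
    funext j
    simp [j.2]

lemma finrank_suppCode (S : Finset (Fin n)) : finrank F (suppCode F n S) = S.card := by
  rw [(suppCodeEquiv S).finrank_eq]
  simp [Module.finrank_pi]

lemma finrank_inf_suppCode_ge (C : Submodule F (Fin n → F)) (S : Finset (Fin n)) :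
    finrank F C + S.card ≤ n + finrank F ↥(C ⊓ suppCode F n S) := by
  have h1 := Submodule.finrank_sup_add_finrank_inf_eq C (suppCode F n S)
  have h2 : finrank F ↥(C ⊔ suppCode F n S) ≤ n := by
    have := Submodule.finrank_le (C ⊔ suppCode F n S)
    rwa [Module.finrank_pi, Fintype.card_fin] at this
  rw [finrank_suppCode] at h1
  omega

/-- Projection onto the coordinates in `T`. -/
def projT (F : Type*) [Field F] (n : ℕ) (T : Finset (Fin n)) :
    (Fin n → F) →ₗ[F] (↥T → F) where
  toFun c := fun j => c j
  map_add' _ _ := rfl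
  map_smul' _ _ := rfl

lemma ker_projT (T : Finset (Fin n)) :
    LinearMap.ker (projT F n T) = suppCode F n Tᶜ := by
  ext c
  simp only [LinearMap.mem_ker, mem_suppCode, Finset.mem_compl, not_not]
  constructor
  · intro h i hi
    exact congrFun h ⟨i, hi⟩
  · intro h
    funext j
    exact h j j.2

set_option synthInstance.maxHeartbeats 1000000 in
lemma finrank_range_projT_add (C : Submodule F (Fin n → F)) (T : Finset (Fin n)) :
    finrank F ↥(LinearMap.range ((projT F n T).comp C.subtype)) +
      finrank F ↥(C ⊓ suppCode F n Tᶜ) = finrank F C := by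
  have h := LinearMap.finrank_range_add_finrank_ker ((projT F n T).comp C.subtype)
  have hker : LinearMap.ker ((projT F n T).comp C.subtype)
      = Submodule.comap C.subtype (C ⊓ suppCode F n Tᶜ) := by
    rw [LinearMap.ker_comp, ker_projT]
    ext x
    simp [Submodule.mem_comap, Submodule.mem_inf, x.2]
  have e : finrank F ↥(Submodule.comap C.subtype (C ⊓ suppCode F n Tᶜ))
      = finrank F ↥(C ⊓ suppCode F n Tᶜ) :=
    (Submodule.comapSubtypeEquivOfLe (inf_le_left : C ⊓ suppCode F n Tᶜ ≤ C)).finrank_eq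
  rw [hker, e] at h
  exact h

/-- The linear functional on `↥T → F` given by pairing with `x`. -/
def formT (T : Finset (Fin n)) (x : Fin n → F) : (↥T → F) →ₗ[F] F where
  toFun y := ∑ j : ↥T, x j * y j
  map_add' a b := by
    simp [mul_add, Finset.sum_add_distrib]
  map_smul' r a := by
    simp [Finset.mul_sum, mul_left_comm]

lemma formT_ne_zero {T : Finset (Fin n)} {x : Fin n → F} {i : Fin n}
    (hi : i ∈ T) (hxi : x i ≠ 0) : formT T x ≠ 0 := by
  intro h
  have := LinearMap.congr_fun h (Pi.single ⟨i, hi⟩ 1)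
  simp only [formT, LinearMap.coe_mk, AddHom.coe_mk, LinearMap.zero_apply] at this
  change ∑ j : ↥T, x j * (Pi.single (⟨i, hi⟩ : ↥T) (1 : F) : ↥T → F) j = 0 at this
  rw [Finset.sum_eq_single (⟨i, hi⟩ : ↥T)] at this
  · simp at this
    exact hxi this
  · intro b _ hb
    simp [Pi.single_apply, hb]
  · simp

lemma formT_proj {T : Finset (Fin n)} {x : Fin n → F} (hx : spt x ⊆ T) (c : Fin n → F) :
    formT T x (projT F n T c) = ∑ i, x i * c i := by
  show ∑ j : ↥T, x j * c j = ∑ i, x i * c i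
  rw [Finset.sum_coe_sort T (fun i => x i * c i)]
  exact Finset.sum_subset (Finset.subset_univ T) (fun i _ hi => by
    have hx0 : x i = 0 := by
      by_contra h
      exact hi (hx (mem_spt.mpr h))
    rw [hx0, zero_mul])

end Aux

section Count

variable {n : ℕ}

lemma count_supersets_eq (A : Finset (Fin n)) {r : ℕ} (hA : A.card = r) :
    #(filter (fun S => A ⊆ S) (powersetCard r (univ : Finset (Fin n)))) = 1 := by
  have h : filter (fun S => A ⊆ S) (powersetCard r (univ : Finset (Fin n))) = {A} := by
    ext S
    simp only [Finset.mem_filter, Finset.mem_powersetCard, Finset.mem_singleton]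
    constructor
    · rintro ⟨⟨-, hcard⟩, hsub⟩
      have h2 : #S ≤ #A := by omega
      exact (Finset.eq_of_subset_of_card_le hsub h2).symm
    · rintro rfl
      exact ⟨⟨Finset.subset_univ _, hA⟩, Finset.Subset.refl _⟩
  rw [h, Finset.card_singleton]

lemma count_supersets_succ (A : Finset (Fin n)) {r : ℕ} (hA : A.card = r) :
    #(filter (fun S => A ⊆ S) (powersetCard (r + 1) (univ : Finset (Fin n)))) = n - r := by
  have key : #Aᶜ = n - r := by rw [Finset.card_compl, Fintype.card_fin, hA]
  rw [← key]
  symm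
  apply Finset.card_bij (fun j _ => insert j A)
  · intro j hj
    have hjA : j ∉ A := Finset.mem_compl.mp hj
    simp only [Finset.mem_filter, Finset.mem_powersetCard]
    exact ⟨⟨Finset.subset_univ _, by rw [Finset.card_insert_of_notMem hjA, hA]⟩,
      Finset.subset_insert _ _⟩
  · intro j hj j' hj' h
    have hjA : j ∉ A := Finset.mem_compl.mp hj
    have hmem : j ∈ insert j' A := h ▸ Finset.mem_insert_self j A
    rcases Finset.mem_insert.mp hmem with h1 | h1
    · exact h1
    · exact absurd h1 hjA
  · intro S hS
    rw [Finset.mem_filter, Finset.mem_powersetCard] at hS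
    obtain ⟨⟨-, hcard⟩, hsub⟩ := hS
    have hd : #(S \ A) = 1 := by
      rw [Finset.card_sdiff_of_subset hsub, hcard, hA]
      omega
    obtain ⟨j, hj⟩ := Finset.card_eq_one.mp hd
    have hjS : j ∈ S \ A := hj ▸ Finset.mem_singleton_self j
    rw [Finset.mem_sdiff] at hjS
    refine ⟨j, Finset.mem_compl.mpr hjS.2, ?_⟩
    have hins : insert j A ⊆ S := Finset.insert_subset hjS.1 hsub
    exact Finset.eq_of_subset_of_card_le hins (by
      rw [Finset.card_insert_of_notMem hjS.2, hA, hcard])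

lemma count_supersets_zero (A : Finset (Fin n)) {r : ℕ} (hA : r < A.card) :
    #(filter (fun S => A ⊆ S) (powersetCard r (univ : Finset (Fin n)))) = 0 := by
  rw [Finset.card_eq_zero, Finset.filter_eq_empty_iff]
  intro S hS hsub
  rw [Finset.mem_powersetCard] at hS
  have := Finset.card_le_card hsub
  omega

lemma forall_eq_of_sum_eq {α : Type*} {s : Finset α} {g : α → ℕ} {b : ℕ}
    (hle : ∀ a ∈ s, b ≤ g a) (hsum : ∑ a ∈ s, g a = s.card * b) :
    ∀ a ∈ s, g a = b := by
  by_contra h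
  push_neg at h
  obtain ⟨a0, ha0, hne⟩ := h
  have hlt : ∑ a ∈ s, b < ∑ a ∈ s, g a :=
    Finset.sum_lt_sum hle ⟨a0, ha0, lt_of_le_of_ne (hle a0 ha0) (Ne.symm hne)⟩
  rw [Finset.sum_const, smul_eq_mul] at hlt
  omega

end Count

section BForm

open Module

variable {F : Type*} [Field F] {n : ℕ}

/-- The linear map sending `x` to the functional `y ↦ ∑ xᵢ yᵢ`. -/
def bform (F : Type*) [Field F] (n : ℕ) :
    (Fin n → F) →ₗ[F] Module.Dual F (Fin n → F) where
  toFun x :=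
    { toFun := fun y => ∑ i, x i * y i
      map_add' := fun a b => by simp [mul_add, Finset.sum_add_distrib]
      map_smul' := fun r a => by simp [Finset.mul_sum, mul_left_comm] }
  map_add' a b := by
    ext y
    simp [add_mul, Finset.sum_add_distrib]
  map_smul' r a := by
    ext y
    simp [Finset.mul_sum, mul_assoc]

lemma bform_injective : Function.Injective (bform F n) := by
  rw [← LinearMap.ker_eq_bot, LinearMap.ker_eq_bot']
  intro x hx
  funext j
  classical
  have := LinearMap.congr_fun hx (Pi.single j 1)
  simp only [bform, LinearMap.coe_mk, AddHom.coe_mk, LinearMap.zero_apply] at this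
  rw [Finset.sum_eq_single j (fun b _ hb => by simp [Pi.single_apply, hb])
    (by simp)] at this
  simpa using this

lemma bform_surjective : Function.Surjective (bform F n) := by
  rw [← LinearMap.range_eq_top]
  apply Submodule.eq_top_of_finrank_eq
  rw [LinearMap.finrank_range_of_inj bform_injective, Subspace.dual_finrank_eq]

/-- `bform` as a linear equivalence. -/
noncomputable def bformEquiv (F : Type*) [Field F] (n : ℕ) :
    (Fin n → F) ≃ₗ[F] Module.Dual F (Fin n → F) :=
  LinearEquiv.ofBijective (bform F n) ⟨bform_injective, bform_surjective⟩

lemma dualCode_eq_comap (C : Submodule F (Fin n → F)) :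
    dualCode C = Submodule.comap (bform F n) C.dualAnnihilator := by
  ext x
  simp only [Submodule.mem_comap, Submodule.mem_dualAnnihilator]
  exact Iff.rfl

lemma finrank_dualCode_add (C : Submodule F (Fin n → F)) :
    finrank F (dualCode C) + finrank F C = n := by
  have hcomap : dualCode C
      = Submodule.comap (bformEquiv F n : (Fin n → F) →ₗ[F] Module.Dual F (Fin n → F))
          C.dualAnnihilator := dualCode_eq_comap C
  have hmap := Submodule.comap_equiv_eq_map_symm (bformEquiv F n) C.dualAnnihilator
  have h3 := LinearEquiv.finrank_map_eq (bformEquiv F n).symm C.dualAnnihilator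
  have h4 : finrank F (dualCode C) = finrank F C.dualAnnihilator := by
    rw [hcomap, hmap, h3]
  have h1 := Submodule.finrank_quotient_add_finrank C
  have h2 : finrank F ((Fin n → F) ⧸ C) = finrank F C.dualAnnihilator :=
    LinearEquiv.finrank_eq (Subspace.quotEquivAnnihilator C)
  rw [Module.finrank_pi, Fintype.card_fin] at h1
  omega

end BForm

section CardCount

open Module

variable {F : Type*} [Field F] [Fintype F] [DecidableEq F] {n : ℕ}

lemma card_subcode (C : Submodule F (Fin n → F)) [DecidablePred (· ∈ C)]
    (S : Finset (Fin n)) :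
    #(filter (fun c => c ∈ C ∧ spt c ⊆ S) univ)
      = Fintype.card F ^ finrank F ↥(C ⊓ suppCode F n S) := by
  classical
  have e : ↥(C ⊓ suppCode F n S) ≃ {c : Fin n → F // c ∈ C ∧ spt c ⊆ S} :=
    Equiv.subtypeEquivRight (fun c => by
      simp [Submodule.mem_inf, mem_suppCode_iff_spt])
  have h1 := card_eq_pow_finrank (K := F) (V := ↥(C ⊓ suppCode F n S))
  have h2 : Fintype.card ↥(C ⊓ suppCode F n S)
      = Fintype.card {c : Fin n → F // c ∈ C ∧ spt c ⊆ S} := Fintype.card_congr e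
  rw [← h1, h2, Fintype.card_subtype]

end CardCount

/-- an AMDS `[n,k,n-k]` code with
`k·A_{n-k} + A_{n-k+1} = (q-1)·C(n, n-k+1)` is near MDS, i.e. its dual is an
AMDS code with parameters `[n, n-k, k]`. -/
theorem stmt5 {F : Type*} [Field F] [Fintype F] [DecidableEq F] {n k : ℕ}
    (C : Submodule F (Fin n → F)) (hC : IsAMDS F n k C) (hkn : k ≤ n)
    (hid : k * {c ∈ (C : Set (Fin n → F)) | hammingNorm c = n - k}.ncard +
      {c ∈ (C : Set (Fin n → F)) | hammingNorm c = n - k + 1}.ncard =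
      (Fintype.card F - 1) * n.choose (n - k + 1)) :
    IsAMDS F n (n - k) (dualCode C) := by
  haveI hdec : DecidablePred (· ∈ C) := Classical.decPred _
  obtain ⟨hrank, hmin, c0, hc0C, hc0ne, hc0wt⟩ := hC
  have hq2 : 2 ≤ Fintype.card F := Fintype.one_lt_card
  have hk1 : 1 ≤ k := by
    by_contra h
    have hk0 : Module.finrank F C = 0 := by omega
    have hbot : C = ⊥ := Submodule.finrank_eq_zero.mp hk0
    rw [hbot] at hc0C
    exact hc0ne (Submodule.mem_bot F |>.mp hc0C)
  have hm1 : 1 ≤ n - k := by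
    rcases Nat.eq_zero_or_pos (n - k) with h | h
    · rw [h] at hc0wt
      exact absurd (hammingNorm_eq_zero.mp hc0wt) hc0ne
    · exact h
  -- per-codeword superset counts
  have percount : ∀ c : Fin n → F,
      (∑ S ∈ powersetCard (n - k + 1) (univ : Finset (Fin n)),
        if c ∈ C ∧ c ≠ 0 ∧ spt c ⊆ S then 1 else 0)
      = (if c ∈ C ∧ hammingNorm c = n - k then k else 0) +
        (if c ∈ C ∧ hammingNorm c = n - k + 1 then 1 else 0) := by
    intro c
    by_cases hcC : c ∈ C
    · by_cases hc0 : c = 0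
      · rw [if_neg (fun h => by
            rw [hc0, hammingNorm_zero] at h
            omega),
          if_neg (fun h => by
            rw [hc0, hammingNorm_zero] at h
            omega)]
        exact Finset.sum_eq_zero (fun S _ => if_neg (fun h => h.2.1 hc0))
      · have hwt : n - k ≤ hammingNorm c := hmin c hcC hc0
        have hLHS : (∑ S ∈ powersetCard (n - k + 1) (univ : Finset (Fin n)),
            if c ∈ C ∧ c ≠ 0 ∧ spt c ⊆ S then 1 else 0)
            = #(filter (fun S => spt c ⊆ S)
                (powersetCard (n - k + 1) (univ : Finset (Fin n)))) := by
          rw [Finset.card_filter]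
          apply Finset.sum_congr rfl
          intro S _
          by_cases h : spt c ⊆ S <;> simp [h, hcC, hc0]
        rw [hLHS]
        by_cases h1 : hammingNorm c = n - k
        · rw [count_supersets_succ (spt c) (by rw [← hammingNorm_eq_card_spt]; exact h1),
            if_pos ⟨hcC, h1⟩, if_neg (fun h => by omega)]
          omega
        · by_cases h2 : hammingNorm c = n - k + 1
          · rw [count_supersets_eq (spt c) (by rw [← hammingNorm_eq_card_spt]; exact h2),
              if_neg (fun h => h1 h.2), if_pos ⟨hcC, h2⟩]
          · rw [count_supersets_zero (spt c) (by rw [← hammingNorm_eq_card_spt]; omega),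
              if_neg (fun h => h1 h.2), if_neg (fun h => h2 h.2)]
    · rw [if_neg (fun h => hcC h.1), if_neg (fun h => hcC h.1)]
      exact Finset.sum_eq_zero (fun S _ => if_neg (fun h => hcC h.1))
  -- total count of nonzero low-weight codewords
  have hsum1 : (∑ S ∈ powersetCard (n - k + 1) (univ : Finset (Fin n)),
      #(filter (fun c => c ∈ C ∧ c ≠ 0 ∧ spt c ⊆ S) univ))
      = k * #(filter (fun c : Fin n → F => c ∈ C ∧ hammingNorm c = n - k) univ) +
        #(filter (fun c : Fin n → F => c ∈ C ∧ hammingNorm c = n - k + 1) univ) := by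
    calc (∑ S ∈ powersetCard (n - k + 1) (univ : Finset (Fin n)),
        #(filter (fun c => c ∈ C ∧ c ≠ 0 ∧ spt c ⊆ S) univ))
        = ∑ S ∈ powersetCard (n - k + 1) (univ : Finset (Fin n)),
            ∑ c : Fin n → F, if c ∈ C ∧ c ≠ 0 ∧ spt c ⊆ S then 1 else 0 := by
          apply Finset.sum_congr rfl
          intro S _
          rw [Finset.card_filter]
      _ = ∑ c : Fin n → F, ∑ S ∈ powersetCard (n - k + 1) (univ : Finset (Fin n)),
            if c ∈ C ∧ c ≠ 0 ∧ spt c ⊆ S then 1 else 0 := Finset.sum_comm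
      _ = ∑ c : Fin n → F, ((if c ∈ C ∧ hammingNorm c = n - k then k else 0) +
            (if c ∈ C ∧ hammingNorm c = n - k + 1 then 1 else 0)) :=
          Finset.sum_congr rfl (fun c _ => percount c)
      _ = (∑ c : Fin n → F, if c ∈ C ∧ hammingNorm c = n - k then k else 0) +
            (∑ c : Fin n → F, if c ∈ C ∧ hammingNorm c = n - k + 1 then 1 else 0) :=
          Finset.sum_add_distrib
      _ = k * #(filter (fun c : Fin n → F => c ∈ C ∧ hammingNorm c = n - k) univ) +
          #(filter (fun c : Fin n → F => c ∈ C ∧ hammingNorm c = n - k + 1) univ) := by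
          congr 1
          · rw [← Finset.sum_filter, Finset.sum_const, smul_eq_mul, mul_comm]
          · rw [← Finset.card_filter]
  -- rewrite hid in terms of finset cards
  have hAset : {c ∈ (C : Set (Fin n → F)) | hammingNorm c = n - k}
      = ↑(filter (fun c : Fin n → F => c ∈ C ∧ hammingNorm c = n - k) univ) := by
    ext c
    simp
  have hBset : {c ∈ (C : Set (Fin n → F)) | hammingNorm c = n - k + 1}
      = ↑(filter (fun c : Fin n → F => c ∈ C ∧ hammingNorm c = n - k + 1) univ) := by
    ext c
    simp
  rw [hAset, hBset, Set.ncard_coe_finset, Set.ncard_coe_finset] at hid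
  -- cardinality of each subcode
  have key1 : ∀ S : Finset (Fin n),
      #(filter (fun c => c ∈ C ∧ c ≠ 0 ∧ spt c ⊆ S) univ) + 1
        = Fintype.card F ^ Module.finrank F ↥(C ⊓ suppCode F n S) := by
    intro S
    rw [← card_subcode C S]
    have he : filter (fun c => c ∈ C ∧ c ≠ 0 ∧ spt c ⊆ S) univ
        = (filter (fun c : Fin n → F => c ∈ C ∧ spt c ⊆ S) univ).erase 0 := by
      ext c
      simp only [Finset.mem_filter, Finset.mem_univ, true_and, Finset.mem_erase]
      tauto
    rw [he]
    apply Finset.card_erase_add_one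
    simp only [Finset.mem_filter, Finset.mem_univ, true_and]
    refine ⟨C.zero_mem, ?_⟩
    intro i hi
    rw [mem_spt] at hi
    simp at hi
  -- lower bound on subcode dimension
  have hge : ∀ S ∈ powersetCard (n - k + 1) (univ : Finset (Fin n)),
      1 ≤ Module.finrank F ↥(C ⊓ suppCode F n S) := by
    intro S hS
    rw [Finset.mem_powersetCard] at hS
    have := finrank_inf_suppCode_ge C S
    rw [hrank, hS.2] at this
    omega
  have key2 : ∀ S ∈ powersetCard (n - k + 1) (univ : Finset (Fin n)),
      Fintype.card F - 1 ≤ #(filter (fun c => c ∈ C ∧ c ≠ 0 ∧ spt c ⊆ S) univ) := by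
    intro S hS
    have h1 := key1 S
    have h2 := hge S hS
    have h3 : Fintype.card F ^ 1 ≤ Fintype.card F ^ Module.finrank F ↥(C ⊓ suppCode F n S) :=
      Nat.pow_le_pow_right (by omega) h2
    rw [pow_one] at h3
    omega
  have hPcard : #(powersetCard (n - k + 1) (univ : Finset (Fin n))) = n.choose (n - k + 1) := by
    rw [Finset.card_powersetCard, Finset.card_univ, Fintype.card_fin]
  have hforce : ∀ S ∈ powersetCard (n - k + 1) (univ : Finset (Fin n)),
      #(filter (fun c => c ∈ C ∧ c ≠ 0 ∧ spt c ⊆ S) univ) = Fintype.card F - 1 := by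
    apply forall_eq_of_sum_eq key2
    rw [hsum1, hid, hPcard, mul_comm]
  have hdim1 : ∀ S : Finset (Fin n), S.card = n - k + 1 →
      Module.finrank F ↥(C ⊓ suppCode F n S) = 1 := by
    intro S hScard
    have hSP : S ∈ powersetCard (n - k + 1) (univ : Finset (Fin n)) :=
      Finset.mem_powersetCard.mpr ⟨Finset.subset_univ S, hScard⟩
    have h1 := key1 S
    rw [hforce S hSP] at h1
    have h2 : Fintype.card F ^ Module.finrank F ↥(C ⊓ suppCode F n S)
        = Fintype.card F ^ 1 := by
      rw [pow_one]
      omega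
    exact Nat.pow_right_injective hq2 h2
  -- dual minimum distance ≥ k
  have hge_k : ∀ x ∈ dualCode C, x ≠ 0 → k ≤ hammingNorm x := by
    intro x hx hx0
    by_contra hlt
    push_neg at hlt
    have hcard : (spt x).card ≤ k - 1 := by
      rw [← hammingNorm_eq_card_spt]
      omega
    obtain ⟨T, hsub, -, hTcard⟩ := Finset.exists_subsuperset_card_eq
      (Finset.subset_univ (spt x)) hcard
      (by rw [Finset.card_univ, Fintype.card_fin]; omega)
    obtain ⟨i, hxi⟩ : ∃ i, x i ≠ 0 := by
      by_contra h
      push_neg at h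
      exact hx0 (funext h)
    have hiT : i ∈ T := hsub (mem_spt.mpr hxi)
    have hf : formT T x ≠ 0 := formT_ne_zero hiT hxi
    have hker := Module.Dual.finrank_ker_add_one_of_ne_zero hf
    rw [Module.finrank_pi, Fintype.card_coe, hTcard] at hker
    have hrle : LinearMap.range ((projT F n T).comp C.subtype)
        ≤ LinearMap.ker (formT T x) := by
      rintro y ⟨⟨c, hc⟩, rfl⟩
      rw [LinearMap.mem_ker]
      show formT T x (projT F n T c) = 0
      rw [formT_proj hsub]
      exact hx c hc
    have hle2 : Module.finrank F ↥(LinearMap.range ((projT F n T).comp C.subtype))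
        ≤ Module.finrank F ↥(LinearMap.ker (formT T x)) :=
      Submodule.finrank_mono hrle
    have hrn := finrank_range_projT_add C T
    rw [hrank] at hrn
    have hdim := hdim1 Tᶜ (by rw [Finset.card_compl, hTcard, Fintype.card_fin]; omega)
    rw [hdim] at hrn
    omega
  refine ⟨?_, ?_, ?_⟩
  · -- dimension of the dual code
    have := finrank_dualCode_add C
    rw [hrank] at this
    omega
  · -- minimum distance of the dual code
    intro x hx hx0
    rw [Nat.sub_sub_self hkn]
    exact hge_k x hx hx0
  · -- existence of a dual codeword of weight exactly k
    have hTcard : ((spt c0)ᶜ : Finset (Fin n)).card = k := by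
      rw [Finset.card_compl, ← hammingNorm_eq_card_spt, hc0wt, Fintype.card_fin]
      omega
    set T : Finset (Fin n) := (spt c0)ᶜ with hT
    have hrn := finrank_range_projT_add C T
    rw [hrank] at hrn
    have hinfge : 1 ≤ Module.finrank F ↥(C ⊓ suppCode F n Tᶜ) := by
      have hne : C ⊓ suppCode F n Tᶜ ≠ ⊥ := by
        intro h
        have hc0mem : c0 ∈ C ⊓ suppCode F n Tᶜ := by
          refine Submodule.mem_inf.mpr ⟨hc0C, ?_⟩
          rw [hT, compl_compl]
          exact mem_suppCode_iff_spt.mpr (Finset.Subset.refl _)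
        rw [h] at hc0mem
        exact hc0ne (Submodule.mem_bot F |>.mp hc0mem)
      rw [Nat.one_le_iff_ne_zero]
      intro h0
      exact hne (Submodule.finrank_eq_zero.mp h0)
    -- the range of the projection is a proper subspace
    have hann := Submodule.finrank_quotient_add_finrank
      (LinearMap.range ((projT F n T).comp C.subtype))
    have hqe : Module.finrank F ((↥T → F) ⧸ LinearMap.range ((projT F n T).comp C.subtype))
        = Module.finrank F
            ↥(LinearMap.range ((projT F n T).comp C.subtype)).dualAnnihilator :=
      LinearEquiv.finrank_eq (Subspace.quotEquivAnnihilator _)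
    rw [Module.finrank_pi, Fintype.card_coe, hTcard, hqe] at hann
    have hannne : (LinearMap.range ((projT F n T).comp C.subtype)).dualAnnihilator ≠ ⊥ := by
      intro h
      rw [h, finrank_bot] at hann
      omega
    obtain ⟨f, hfann, hfne⟩ := (Submodule.ne_bot_iff _).mp hannne
    set xv : Fin n → F := fun i => if h : i ∈ T then f (Pi.single (⟨i, h⟩ : ↥T) 1) else 0
      with hxv
    have hsptx : spt xv ⊆ T := by
      intro i hi
      rw [mem_spt] at hi
      by_contra hiT
      exact hi (dif_neg hiT)
    have hform : formT T xv = f := by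
      apply LinearMap.pi_ext
      intro j a
      show (∑ j' : ↥T, xv j' * (Pi.single j a : ↥T → F) j') = f (Pi.single j a)
      rw [Finset.sum_eq_single j]
      · have hxvj : xv ↑j = f (Pi.single j 1) := by
          have h : xv ↑j = f (Pi.single (⟨↑j, j.2⟩ : ↥T) 1) := dif_pos j.2
          rw [show (⟨↑j, j.2⟩ : ↥T) = j from Subtype.coe_eta j j.2] at h
          exact h
        have hps : Pi.single j a = a • Pi.single (M := fun _ : ↥T => F) j 1 := by
          rw [← Pi.single_smul, smul_eq_mul, mul_one]
        rw [Pi.single_eq_same, hxvj, hps, map_smul, smul_eq_mul, mul_comm]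
      · intro b _ hb
        rw [Pi.single_eq_of_ne hb, mul_zero]
      · intro hj
        exact absurd (Finset.mem_univ j) hj
    have hmem : xv ∈ dualCode C := by
      intro c hc
      show (∑ i, xv i * c i) = 0
      rw [← formT_proj hsptx c, hform]
      exact (Submodule.mem_dualAnnihilator f).mp hfann _ ⟨⟨c, hc⟩, rfl⟩
    have hne0 : xv ≠ 0 := by
      intro h0
      apply hfne
      rw [← hform, h0]
      apply LinearMap.ext
      intro y
      simp [formT]
    refine ⟨xv, hmem, hne0, ?_⟩
    rw [Nat.sub_sub_self hkn]
    have hle : hammingNorm xv ≤ k := by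
      rw [hammingNorm_eq_card_spt]
      calc (spt xv).card ≤ T.card := Finset.card_le_card hsptx
        _ = k := hTcard
    exact le_antisymm hle (hge_k xv hmem hne0)
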